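/- arXiv:1109.4184 — 4 statements merged into one kernel-verified Lean document; each statement's English description precedes it below -/
import Mathlib

section
/- Consider a locally finite, pure, complete polyhedral complex P in ℝ^k and let {P_i}_{i=1}^{k+1} be a partition of the set of maximal cells of P. Fix a point r ∈ ℝ^k. Then there exist μ_1, …, μ_{k+1} ∈ ℝ with μ_i ≥ 0 and ∑_{i=1}^{k+1} μ_i = 1 such that for every function θ : ℝ^k → ℝ that is piecewise linear compatible with {P_i}_{i=1}^{k+1} with gradients g^1, …, g^{k+1} corresponding to this partition, one has θ(r) = θ(0) + ∑_{i=1}^{k+1} μ_i (g^i · r). -/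
open scoped BigOperators

noncomputable section

/-- `ℝ^k` with the Euclidean norm. -/
abbrev Vec (k : ℕ) := EuclideanSpace ℝ (Fin k)

/-- The point of `ℝ^k` with the given integer coordinates. -/
def intVec (k : ℕ) (w : Fin k → ℤ) : Vec k := WithLp.toLp 2 (fun i => (w i : ℝ))

/-- A feasible solution of the infinite group relaxation: a finitely supported
`s : ℝ^k → ℕ` with `f + ∑ r, s r • r ∈ ℤ^k`. -/
def IsFeasible (k : ℕ) (f : Vec k) (s : Vec k →₀ ℕ) : Prop :=
  ∃ w : Fin k → ℤ, f + ∑ r ∈ s.support, (s r : ℝ) • r = intVec k w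

/-- A valid function for the infinite group relaxation. -/
def IsValid (k : ℕ) (f : Vec k) (π : Vec k → ℝ) : Prop :=
  (∀ r, 0 ≤ π r) ∧
  ∀ s : Vec k →₀ ℕ, IsFeasible k f s → 1 ≤ ∑ r ∈ s.support, π r * (s r : ℝ)

/-- A minimal valid function: no valid `π' ≠ π` with `π' ≤ π` pointwise. -/
def IsMinimal (k : ℕ) (f : Vec k) (π : Vec k → ℝ) : Prop :=
  IsValid k f π ∧ ¬ ∃ π' : Vec k → ℝ, IsValid k f π' ∧ π' ≠ π ∧ ∀ r, π' r ≤ π r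

/-- `S(θ)`: the feasible solutions satisfying the inequality of `θ` at equality. -/
def Ssol (k : ℕ) (f : Vec k) (θ : Vec k → ℝ) : Set (Vec k →₀ ℕ) :=
  {s | IsFeasible k f s ∧ ∑ r ∈ s.support, θ r * (s r : ℝ) = 1}

/-- A facet. -/
def IsFacet (k : ℕ) (f : Vec k) (π : Vec k → ℝ) : Prop :=
  IsValid k f π ∧
  ∀ π' : Vec k → ℝ, IsValid k f π' → Ssol k f π ⊆ Ssol k f π' → π' = π

/-- An extreme valid function. -/
def IsExtremeValid (k : ℕ) (f : Vec k) (π : Vec k → ℝ) : Prop :=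
  IsValid k f π ∧ ∀ π₁ π₂ : Vec k → ℝ, IsValid k f π₁ → IsValid k f π₂ →
    (∀ r, π r = (1 / 2) * π₁ r + (1 / 2) * π₂ r) → π₁ = π ∧ π₂ = π

/-- `E(θ)`: the pairs where `θ` is additive. -/
def Eadd (k : ℕ) (θ : Vec k → ℝ) : Set (Vec k × Vec k) :=
  {p | θ (p.1 + p.2) = θ p.1 + θ p.2}

/-- `θ` is genuinely `k`-dimensional: it does not factor through a linear map to `ℝ^(k-1)`. -/
def GenuinelyFullDim (k : ℕ) (θ : Vec k → ℝ) : Prop :=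
  ¬ ∃ (φ : Vec (k - 1) → ℝ) (T : Vec k →ₗ[ℝ] Vec (k - 1)), θ = φ ∘ T

/-- The cone generated by a finite family of vectors. -/
def coneOf {k m : ℕ} (v : Fin m → Vec k) : Set (Vec k) :=
  {x | ∃ lam : Fin m → ℝ, (∀ i, 0 ≤ lam i) ∧ x = ∑ i, lam i • v i}

/-- The cone generated by a set of vectors. -/
def coneOfSet {k : ℕ} (Vs : Set (Vec k)) : Set (Vec k) :=
  {x | ∃ (n : ℕ) (v : Fin n → Vec k) (lam : Fin n → ℝ),
    (∀ i, v i ∈ Vs) ∧ (∀ i, 0 ≤ lam i) ∧ x = ∑ i, lam i • v i}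

/-- A polyhedron: an intersection of finitely many closed halfspaces. -/
def IsPolyhedron {k : ℕ} (P : Set (Vec k)) : Prop :=
  ∃ (n : ℕ) (a : Fin n → Vec k) (b : Fin n → ℝ),
    P = {x | ∀ i, (inner ℝ (a i) x : ℝ) ≤ b i}

/-- A face of a polyhedron cut out by a valid inequality. -/
def IsFace {k : ℕ} (F P : Set (Vec k)) : Prop :=
  ∃ (a : Vec k) (b : ℝ), (∀ x ∈ P, (inner ℝ a x : ℝ) ≤ b) ∧
    F = {x | x ∈ P ∧ (inner ℝ a x : ℝ) = b}

/-- A polyhedral complex in `ℝ^k`. -/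
structure PolyhedralComplex (k : ℕ) where
  cells : Set (Set (Vec k))
  poly : ∀ P ∈ cells, IsPolyhedron P
  faces_mem : ∀ P ∈ cells, ∀ F : Set (Vec k), IsFace F P → F ∈ cells
  inter_face : ∀ P ∈ cells, ∀ Q ∈ cells, IsFace (P ∩ Q) P ∧ IsFace (P ∩ Q) Q

/-- A maximal cell of a polyhedral complex. -/
def IsMaximalCell {k : ℕ} (PC : PolyhedralComplex k) (P : Set (Vec k)) : Prop :=
  P ∈ PC.cells ∧ ∀ Q ∈ PC.cells, P ⊆ Q → Q = P

/-- A pure complex: all maximal cells are full-dimensional. -/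
def PolyhedralComplex.Pure {k : ℕ} (PC : PolyhedralComplex k) : Prop :=
  ∀ P : Set (Vec k), IsMaximalCell PC P → (interior P).Nonempty

/-- A complete complex: the union of the cells is all of `ℝ^k`. -/
def PolyhedralComplex.Complete {k : ℕ} (PC : PolyhedralComplex k) : Prop :=
  ⋃₀ PC.cells = Set.univ

/-- A polyhedral fan: finitely many cells, all of which are cones. -/
def IsFan {k : ℕ} (F : PolyhedralComplex k) : Prop :=
  F.cells.Finite ∧ ∀ C ∈ F.cells, ∀ x ∈ C, ∀ t : ℝ, 0 ≤ t → t • x ∈ C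

/-- A locally finite polyhedral complex: near each point it looks like a translated fan. -/
def PolyhedralComplex.LocFinite {k : ℕ} (PC : PolyhedralComplex k) : Prop :=
  ∀ r : Vec k, ∃ ε : ℝ, 0 < ε ∧ ∃ F : PolyhedralComplex k, IsFan F ∧
    {S : Set (Vec k) | ∃ P ∈ PC.cells, S = P ∩ Metric.ball r ε ∧ S.Nonempty} =
    {S : Set (Vec k) | ∃ C ∈ F.cells,
      S = ((fun x => x + r) '' C) ∩ Metric.ball r ε ∧ S.Nonempty}

/-- `θ` is piecewise linear with cell complex `PC` (pure and complete), the maximal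
cell `P` carrying the gradient `grad P`. -/
def IsPWLWith {k : ℕ} (PC : PolyhedralComplex k) (grad : Set (Vec k) → Vec k)
    (θ : Vec k → ℝ) : Prop :=
  PC.Pure ∧ PC.Complete ∧
  ∀ P : Set (Vec k), IsMaximalCell PC P →
    ∃ δ : ℝ, ∀ x ∈ P, θ x = (inner ℝ (grad P) x : ℝ) + δ

/-- The gradient set of a piecewise linear function. -/
def gradSet {k : ℕ} (PC : PolyhedralComplex k) (grad : Set (Vec k) → Vec k) : Set (Vec k) :=
  {g | ∃ P : Set (Vec k), IsMaximalCell PC P ∧ grad P = g}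

section AuxLemmas

lemma convex_of_isPolyhedron {k : ℕ} {P : Set (Vec k)} (h : IsPolyhedron P) :
    Convex ℝ P := by
  obtain ⟨n, a, b, rfl⟩ := h
  intro x hx y hy s t hs ht hst
  intro i
  have hx' := hx i
  have hy' := hy i
  simp only [Set.mem_setOf_eq] at *
  rw [inner_add_right, real_inner_smul_right, real_inner_smul_right]
  calc s * inner ℝ (a i) x + t * inner ℝ (a i) y ≤ s * b i + t * b i := by
        apply add_le_add <;> apply mul_le_mul_of_nonneg_left <;> assumption
    _ = b i := by rw [← add_mul, hst, one_mul]

lemma ray_lemma {k : ℕ} (PC : PolyhedralComplex k)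
    (hlf : PC.LocFinite) (hcomp : PC.Complete) (x d : Vec k) :
    ∃ s : ℝ, 0 < s ∧ ∃ P, IsMaximalCell PC P ∧
      ∀ u : ℝ, 0 ≤ u → u ≤ s → x + u • d ∈ P := by
  obtain ⟨ε, hε, F, ⟨hFfin, hFcone⟩, hset⟩ := hlf x
  set B := Metric.ball x ε with hB
  -- small step size
  set s₀ : ℝ := ε / (2 * (‖d‖ + 1)) with hs₀def
  have hd1 : (0:ℝ) < ‖d‖ + 1 := by positivity
  have hs₀ : 0 < s₀ := by positivity
  have hsmall : ∀ u : ℝ, 0 ≤ u → u ≤ s₀ → x + u • d ∈ B := by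
    intro u hu hus
    rw [hB, Metric.mem_ball, dist_eq_norm, add_sub_cancel_left, norm_smul,
      Real.norm_of_nonneg hu]
    calc u * ‖d‖ ≤ s₀ * (‖d‖ + 1) := by
          apply mul_le_mul hus (by linarith) (norm_nonneg d) (le_of_lt hs₀)
      _ = ε / 2 := by rw [hs₀def]; field_simp
      _ < ε := by linarith
  -- the point x + s₀ • d lies in some cell
  have hy : x + s₀ • d ∈ ⋃₀ PC.cells := by rw [hcomp]; trivial
  obtain ⟨P₀, hP₀, hyP₀⟩ := hy
  have hyB : x + s₀ • d ∈ B := hsmall s₀ (le_of_lt hs₀) le_rfl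
  have hP₀B : (P₀ ∩ B).Nonempty := ⟨_, hyP₀, hyB⟩
  have hmemL : (P₀ ∩ B) ∈ {S : Set (Vec k) | ∃ P ∈ PC.cells,
      S = P ∩ Metric.ball x ε ∧ S.Nonempty} := ⟨P₀, hP₀, rfl, hP₀B⟩
  rw [hset] at hmemL
  obtain ⟨C₀, hC₀, hC₀eq, -⟩ := hmemL
  have hs₀d : s₀ • d ∈ C₀ := by
    have : x + s₀ • d ∈ ((fun z => z + x) '' C₀) ∩ B := by
      rw [← hC₀eq]; exact ⟨hyP₀, hyB⟩
    obtain ⟨⟨c, hc, hcx⟩, -⟩ := this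
    have : c = s₀ • d := by
      have := hcx
      simpa [add_comm] using this
    rwa [← this]
  -- family of candidate cones
  set 𝒮 : Set (Set (Vec k)) := {C | C ∈ F.cells ∧ s₀ • d ∈ C ∧
    ∃ P ∈ PC.cells, P ∩ B = ((fun z => z + x) '' C) ∩ B ∧ (P ∩ B).Nonempty} with h𝒮
  have h𝒮fin : 𝒮.Finite := hFfin.subset (fun C hC => hC.1)
  have h𝒮ne : 𝒮.Nonempty := ⟨C₀, hC₀, hs₀d, P₀, hP₀, by rw [hC₀eq], hP₀B⟩
  obtain ⟨C, hC𝒮, hCmax⟩ := h𝒮fin.exists_maximalFor id 𝒮 h𝒮ne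
  obtain ⟨hCF, hCd, P, hPcell, hPB, hPBne⟩ := hC𝒮
  -- ray in C
  have hray : ∀ u : ℝ, 0 ≤ u → u • d ∈ C := by
    intro u hu
    have := hFcone C hCF _ hCd (u / s₀) (by positivity)
    rwa [smul_smul, div_mul_cancel₀ _ (ne_of_gt hs₀), ] at this
  have hrayP : ∀ u : ℝ, 0 ≤ u → u ≤ s₀ → x + u • d ∈ P ∩ B := by
    intro u hu hus
    rw [hPB]
    exact ⟨⟨u • d, hray u hu, by rw [add_comm]⟩, hsmall u hu hus⟩
  have hxP : x ∈ P ∩ B := by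
    have := hrayP 0 le_rfl (le_of_lt hs₀)
    simpa using this
  refine ⟨s₀, hs₀, P, ⟨hPcell, ?_⟩, fun u hu hus => (hrayP u hu hus).1⟩
  -- maximality of P
  intro Q hQcell hPQ
  have hQBne : (Q ∩ B).Nonempty := hPBne.mono (Set.inter_subset_inter_left B hPQ)
  have hmemLQ : (Q ∩ B) ∈ {S : Set (Vec k) | ∃ P ∈ PC.cells,
      S = P ∩ Metric.ball x ε ∧ S.Nonempty} := ⟨Q, hQcell, rfl, hQBne⟩
  rw [hset] at hmemLQ
  obtain ⟨CQ, hCQF, hCQeq, -⟩ := hmemLQ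
  -- C ⊆ CQ
  have hCsub : C ⊆ CQ := by
    intro c hc
    set t : ℝ := ε / (2 * (‖c‖ + 1)) with htdef
    have ht : 0 < t := by positivity
    have htc : t • c ∈ C := hFcone C hCF c hc t (le_of_lt ht)
    have htcB : x + t • c ∈ B := by
      rw [hB, Metric.mem_ball, dist_eq_norm, add_sub_cancel_left, norm_smul,
        Real.norm_of_nonneg (le_of_lt ht)]
      have h1 : (0:ℝ) < ‖c‖ + 1 := by positivity
      calc t * ‖c‖ ≤ t * (‖c‖ + 1) := by nlinarith [norm_nonneg c]
        _ = ε / 2 := by rw [htdef]; field_simp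
        _ < ε := by linarith
    have hmem : x + t • c ∈ P ∩ B := by
      rw [hPB]
      exact ⟨⟨t • c, htc, by rw [add_comm]⟩, htcB⟩
    have hmemQ : x + t • c ∈ Q ∩ B :=
      ⟨hPQ hmem.1, hmem.2⟩
    rw [hCQeq] at hmemQ
    obtain ⟨⟨c', hc', hc'x⟩, -⟩ := hmemQ
    have hc'eq : c' = t • c := by simpa [add_comm] using hc'x
    have : t • c ∈ CQ := hc'eq ▸ hc'
    have := hFcone CQ hCQF _ this t⁻¹ (by positivity)
    rwa [smul_smul, inv_mul_cancel₀ (ne_of_gt ht), one_smul] at this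
  -- CQ ∈ 𝒮, so C = CQ by maximality
  have hCQ𝒮 : CQ ∈ 𝒮 := ⟨hCQF, hCsub hCd, Q, hQcell, hCQeq, hQBne⟩
  have hCeq : C = CQ := Set.Subset.antisymm hCsub (hCmax hCQ𝒮 hCsub)
  have hQBPB : Q ∩ B = P ∩ B := by rw [hCQeq, ← hCeq, ← hPB]
  -- face argument: Q ⊆ P
  obtain ⟨a, b, hvalid, hfaceeq⟩ := (PC.inter_face P hPcell Q hQcell).2
  have hPQeq : P ∩ Q = P := Set.inter_eq_left.mpr hPQ
  rw [hPQeq] at hfaceeq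
  have hxPa : (inner ℝ a x : ℝ) = b := by
    have hx2 : x ∈ {y | y ∈ Q ∧ (inner ℝ a y : ℝ) = b} := by rw [← hfaceeq]; exact hxP.1
    exact hx2.2
  have hQconv : Convex ℝ Q := convex_of_isPolyhedron (PC.poly Q hQcell)
  refine Set.Subset.antisymm ?_ hPQ
  intro q hq
  set σ : ℝ := min 1 (ε / (2 * (‖q - x‖ + 1))) with hσdef
  have hσpos : 0 < σ := lt_min one_pos (by positivity)
  have hσ1 : σ ≤ 1 := min_le_left _ _
  have hz : x + σ • (q - x) ∈ Q := by
    have := hQconv (hPQ hxP.1) hq (by linarith : (0:ℝ) ≤ 1 - σ) (le_of_lt hσpos) (by ring)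
    have heq : (1 - σ) • x + σ • q = x + σ • (q - x) := by
      rw [smul_sub]; module
    rwa [heq] at this
  have hzB : x + σ • (q - x) ∈ B := by
    rw [hB, Metric.mem_ball, dist_eq_norm, add_sub_cancel_left, norm_smul,
      Real.norm_of_nonneg (le_of_lt hσpos)]
    have h1 : (0:ℝ) < ‖q - x‖ + 1 := by positivity
    have hσ2 : σ ≤ ε / (2 * (‖q - x‖ + 1)) := min_le_right _ _
    calc σ * ‖q - x‖ ≤ (ε / (2 * (‖q - x‖ + 1))) * (‖q - x‖ + 1) := by
          nlinarith [norm_nonneg (q - x)]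
      _ = ε / 2 := by field_simp
      _ < ε := by linarith
  have hzP : x + σ • (q - x) ∈ P := by
    have : x + σ • (q - x) ∈ P ∩ B := hQBPB ▸ (⟨hz, hzB⟩ : _ ∈ Q ∩ B)
    exact this.1
  have hza : (inner ℝ a (x + σ • (q - x)) : ℝ) = b := by
    have hz2 : x + σ • (q - x) ∈ {y | y ∈ Q ∧ (inner ℝ a y : ℝ) = b} := by
      rw [← hfaceeq]; exact hzP
    exact hz2.2
  rw [inner_add_right, real_inner_smul_right, inner_sub_right, hxPa] at hza
  have hqa : (inner ℝ a q : ℝ) = b := by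
    have : σ * ((inner ℝ a q : ℝ) - b) = 0 := by linarith
    have := mul_eq_zero.mp this
    rcases this with h | h
    · exact absurd h (ne_of_gt hσpos)
    · linarith
  have : q ∈ P := by rw [hfaceeq]; exact ⟨hq, hqa⟩
  exact this

end AuxLemmas

/-- Line-integral lemma: the value of any compatible piecewise linear function at `r`
is a fixed convex combination of its gradients applied to `r`. -/
theorem statement13 (k : ℕ) (PC : PolyhedralComplex k)
    (hlf : PC.LocFinite) (hpure : PC.Pure) (hcomp : PC.Complete)
    (part : Fin (k + 1) → Set (Set (Vec k)))
    (hpart_max : ∀ i, ∀ P ∈ part i, IsMaximalCell PC P)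
    (hpart_cover : ∀ P : Set (Vec k), IsMaximalCell PC P → ∃! i, P ∈ part i)
    (r : Vec k) :
    ∃ μ : Fin (k + 1) → ℝ, (∀ i, 0 ≤ μ i) ∧ ∑ i, μ i = 1 ∧
      ∀ (θ : Vec k → ℝ) (g : Fin (k + 1) → Vec k),
        (∀ i, ∀ P ∈ part i, ∃ δ : ℝ, ∀ x ∈ P, θ x = (inner ℝ (g i) x : ℝ) + δ) →
        θ r = θ 0 + ∑ i, μ i * (inner ℝ (g i) r : ℝ) := by
    classical
  set Claim : ℝ → Prop := fun t =>
    ∃ μ : Fin (k + 1) → ℝ, (∀ i, 0 ≤ μ i) ∧ ∑ i, μ i = t ∧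
      ∀ (θ : Vec k → ℝ) (g : Fin (k + 1) → Vec k),
        (∀ i, ∀ P ∈ part i, ∃ δ : ℝ, ∀ x ∈ P, θ x = (inner ℝ (g i) x : ℝ) + δ) →
        θ (t • r) = θ 0 + ∑ i, μ i * (inner ℝ (g i) r : ℝ) with hClaim
  -- stepping lemma
  have step : ∀ t t' : ℝ, t ≤ t' → Claim t →
      ∀ P : Set (Vec k), IsMaximalCell PC P → t • r ∈ P → t' • r ∈ P → Claim t' := by
    rintro t t' htt' ⟨μ, hμ0, hμs, hμθ⟩ P hPmax h1 h2
    obtain ⟨i₀, hi₀, -⟩ := hpart_cover P hPmax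
    refine ⟨fun i => μ i + if i = i₀ then t' - t else 0, ?_, ?_, ?_⟩
    · intro i
      have := hμ0 i
      dsimp only
      split <;> linarith
    · rw [Finset.sum_add_distrib, hμs, Finset.sum_ite_eq' Finset.univ i₀ fun _ => t' - t]
      simp
    · intro θ g hθ
      obtain ⟨δ, hδ⟩ := hθ i₀ P hi₀
      have e1 := hδ _ h1
      have e2 := hδ _ h2
      rw [real_inner_smul_right] at e1 e2
      have key : θ (t' • r) = θ (t • r) + (t' - t) * (inner ℝ (g i₀) r : ℝ) := by
        rw [e1, e2]; ring
      rw [key, hμθ θ g hθ]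
      have hterm : ∀ i ∈ Finset.univ, (μ i + if i = i₀ then t' - t else 0) * (inner ℝ (g i) r : ℝ)
          = μ i * (inner ℝ (g i) r : ℝ) + (if i = i₀ then (t' - t) * (inner ℝ (g i₀) r : ℝ) else 0) := by
        intro i _
        split
        · rename_i h; subst h; ring
        · ring
      rw [Finset.sum_congr rfl hterm, Finset.sum_add_distrib,
        Finset.sum_ite_eq' Finset.univ i₀ fun _ => (t' - t) * (inner ℝ (g i₀) r : ℝ)]
      simp
      ring
  have hclaim0 : Claim 0 := by
    refine ⟨fun _ => 0, fun i => le_rfl, by simp, ?_⟩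
    intro θ g hθ
    simp
  set T : Set ℝ := {t | t ∈ Set.Icc (0:ℝ) 1 ∧ Claim t} with hT
  have h0T : (0:ℝ) ∈ T := ⟨⟨le_rfl, zero_le_one⟩, hclaim0⟩
  have hTne : T.Nonempty := ⟨0, h0T⟩
  have hTbdd : BddAbove T := ⟨1, fun t ht => ht.1.2⟩
  set τ : ℝ := sSup T with hτdef
  have hτ0 : 0 ≤ τ := le_csSup hTbdd h0T
  have hτ1 : τ ≤ 1 := csSup_le hTne fun t ht => ht.1.2
  -- τ ∈ T
  have hτT : τ ∈ T := by
    rcases eq_or_lt_of_le hτ0 with h0 | h0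
    · rwa [← h0]
    · obtain ⟨s, hs, P, hPmax, hray⟩ := ray_lemma PC hlf hcomp (τ • r) (-r)
      have hray' : ∀ u : ℝ, 0 ≤ u → u ≤ s → (τ - u) • r ∈ P := by
        intro u hu hus
        have := hray u hu hus
        rwa [smul_neg, ← sub_eq_add_neg, ← sub_smul] at this
      set s' : ℝ := min s τ with hs'def
      have hs' : 0 < s' := lt_min hs h0
      obtain ⟨t, htT, htlt⟩ := exists_lt_of_lt_csSup hTne (by linarith : τ - s' < τ)
      have htτ : t ≤ τ := le_csSup hTbdd htT
      have h1 : t • r ∈ P := by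
        have : (τ - (τ - t)) • r ∈ P := by
          apply hray' (τ - t) (by linarith)
          have : s' ≤ s := min_le_left _ _
          linarith
        simpa using this
      have h2 : τ • r ∈ P := by
        have := hray' 0 le_rfl (le_of_lt hs)
        simpa using this
      exact ⟨⟨hτ0, hτ1⟩, step t τ htτ htT.2 P hPmax h1 h2⟩
  -- τ = 1
  have hτeq : τ = 1 := by
    by_contra hne
    have hτlt : τ < 1 := lt_of_le_of_ne hτ1 hne
    obtain ⟨s, hs, P, hPmax, hray⟩ := ray_lemma PC hlf hcomp (τ • r) r
    have hray' : ∀ u : ℝ, 0 ≤ u → u ≤ s → (τ + u) • r ∈ P := by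
      intro u hu hus
      have := hray u hu hus
      rwa [← add_smul] at this
    set t' : ℝ := min (τ + s) 1 with ht'def
    have ht'τ : τ < t' := lt_min (by linarith) hτlt
    have ht'T : t' ∈ T := by
      refine ⟨⟨by linarith, min_le_right _ _⟩, ?_⟩
      apply step τ t' (le_of_lt ht'τ) hτT.2 P hPmax
      · have := hray' 0 le_rfl (le_of_lt hs)
        simpa using this
      · have : (τ + (t' - τ)) • r ∈ P := by
          apply hray' (t' - τ) (by linarith)
          have : t' ≤ τ + s := min_le_left _ _
          linarith
        simpa using this
    have := le_csSup hTbdd ht'T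
    linarith
  obtain ⟨μ, hμ0, hμs, hμθ⟩ := hτeq ▸ hτT.2
  refine ⟨μ, hμ0, hμs, ?_⟩
  intro θ g hθ
  have := hμθ θ g hθ
  rwa [one_smul] at this
end
end

section
/- (Interval Lemma) Let θ : ℝ → ℝ be a function bounded on every bounded interval. Given real numbers u_1 < u_2 and v_1 < v_2, let U = [u_1, u_2], V = [v_1, v_2], and U + V = [u_1 + v_1, u_2 + v_2]. If θ(u) + θ(v) = θ(u + v) for every u ∈ U and v ∈ V, then there exists c ∈ ℝ such that θ(u) = θ(u_1) + c(u − u_1) for every u ∈ U, θ(v) = θ(v_1) + c(v − v_1) for every v ∈ V, and θ(w) = θ(u_1 + v_1) + c(w − u_1 − v_1) for every w ∈ U + V. -/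
open scoped BigOperators

noncomputable section

private lemma intervalLemma_core (F : ℝ → ℝ) (a b B : ℝ) (ha : 0 < a) (hab : a ≤ b)
    (hadd : ∀ x y : ℝ, 0 ≤ x → x ≤ a → 0 ≤ y → y ≤ b → F (x + y) = F x + F y)
    (hB : ∀ t : ℝ, 0 ≤ t → t ≤ a → |F t| ≤ B) :
    ∀ t, 0 ≤ t → t ≤ a → F t = (F a / a) * t := by
  have hF0 : F 0 = 0 := by
    have h := hadd 0 0 le_rfl ha.le le_rfl (ha.le.trans hab)
    norm_num at h
    linarith
  have hmul : ∀ n : ℕ, ∀ t : ℝ, 0 ≤ t → (n : ℝ) * t ≤ a → F ((n : ℝ) * t) = n * F t := by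
    intro n
    induction n with
    | zero => intro t _ _; simp [hF0]
    | succ n ih =>
      intro t ht hle
      have hle' : ((n : ℝ) + 1) * t ≤ a := by push_cast at hle; linarith
      have hnt : (n : ℝ) * t ≤ a := by nlinarith
      have htb : t ≤ b := by nlinarith
      have h1 : F ((n : ℝ) * t + t) = F ((n : ℝ) * t) + F t :=
        hadd _ t (by positivity) hnt ht htb
      have h2 : ((n : ℝ) + 1) * t = (n : ℝ) * t + t := by ring
      push_cast
      rw [h2, h1, ih t ht hnt]; ring
  set c := F a / a with hc
  have hca : c * a = F a := by rw [hc]; exact div_mul_cancel₀ (F a) ha.ne'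
  have hErat : ∀ p q : ℕ, 0 < q → p ≤ q → F ((p : ℝ) * (a / q)) = c * ((p : ℝ) * (a / q)) := by
    intro p q hq hpq
    have hq0 : (q : ℝ) ≠ 0 := by positivity
    have hs : (0 : ℝ) ≤ a / q := by positivity
    have hqs : (q : ℝ) * (a / q) = a := by field_simp
    have hFa : F a = q * F (a / q) := by
      have h := hmul q (a / q) hs (le_of_eq hqs)
      rw [hqs] at h
      exact h
    have hpq' : (p : ℝ) ≤ q := by exact_mod_cast hpq
    have hps : (p : ℝ) * (a / q) ≤ a :=
      (mul_le_mul_of_nonneg_right hpq' hs).trans (le_of_eq hqs)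
    rw [hmul p _ hs hps, hc, hFa]
    field_simp
  intro t ht hta
  rcases eq_or_lt_of_le ht with h0 | h0
  · simp [← h0, hF0]
  set e := F t - c * t with he
  suffices h : ∀ n : ℕ, ((n : ℝ) + 1) * |e| ≤ B + |c| * a by
    have he0 : e = 0 := by
      by_contra hne
      have habs : 0 < |e| := abs_pos.2 hne
      obtain ⟨n, hn⟩ := exists_nat_gt ((B + |c| * a) / |e|)
      have h1 := h n
      rw [div_lt_iff₀ habs] at hn
      nlinarith
    rw [he] at he0; linarith
  intro n
  have hn1 : (0 : ℝ) < (n : ℝ) + 1 := by positivity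
  have h1 : max 0 (t / a - 1 / ((n : ℝ) + 1)) < t / a := by
    apply max_lt
    · positivity
    · have : 0 < 1 / ((n : ℝ) + 1) := by positivity
      linarith
  obtain ⟨r, hr1, hr2⟩ := exists_rat_btwn h1
  have hr0 : 0 < (r : ℝ) := lt_of_le_of_lt (le_max_left _ _) hr1
  have hrt : (r : ℝ) * a < t := by
    rw [lt_div_iff₀ ha] at hr2; exact hr2
  have hr1' : (r : ℝ) < 1 := by
    have : t / a ≤ 1 := by rw [div_le_one ha]; exact hta
    linarith
  have hra : (r : ℝ) * a ≤ a := by nlinarith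
  have hlow : t / a - 1 / ((n : ℝ) + 1) < (r : ℝ) := lt_of_le_of_lt (le_max_right _ _) hr1
  set s := t - (r : ℝ) * a with hsdef
  have hs0 : 0 < s := by simp [hsdef]; linarith
  have hsmall : ((n : ℝ) + 1) * s ≤ a := by
    have h2 : t - a / ((n : ℝ) + 1) < (r : ℝ) * a := by
      have := mul_lt_mul_of_pos_right hlow ha
      rw [sub_mul, div_mul_eq_mul_div, div_mul_eq_mul_div] at this
      calc t - a / ((n:ℝ)+1) = t * a / a - 1 * a / ((n:ℝ)+1) := by
            field_simp
          _ < (r : ℝ) * a := this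
    have : s < a / ((n : ℝ) + 1) := by simp [hsdef]; linarith
    rw [lt_div_iff₀ hn1] at this
    nlinarith
  -- express r*a = p*(a/q)
  set p : ℕ := r.num.toNat with hp
  set q : ℕ := r.den with hq
  have hq0 : 0 < q := r.pos
  have hnum : (0:ℤ) ≤ r.num := by
    have : (0:ℚ) ≤ r := by exact_mod_cast hr0.le
    exact Rat.num_nonneg.2 this
  have hrpq : (r : ℝ) = (p : ℝ) / (q : ℝ) := by
    rw [Rat.cast_def, hp, hq]
    congr 1
    exact_mod_cast (Int.toNat_of_nonneg hnum).symm
  have hpq : p ≤ q := by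
    have hq0' : (0:ℝ) < (q:ℝ) := by exact_mod_cast hq0
    have : (p : ℝ) / (q : ℝ) < 1 := by rw [← hrpq]; exact hr1'
    rw [div_lt_one hq0'] at this
    exact_mod_cast this.le
  have hreq : (r : ℝ) * a = (p : ℝ) * (a / q) := by rw [hrpq]; ring
  have hFra : F ((r : ℝ) * a) = c * ((r : ℝ) * a) := by
    rw [hreq]; exact hErat p q hq0 hpq
  have hFts : F t = F ((r : ℝ) * a) + F s := by
    have h3 := hadd ((r : ℝ) * a) s (by positivity) hra hs0.le
      (le_trans (by nlinarith) hab)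
    have h4 : (r : ℝ) * a + s = t := by simp [hsdef]
    rw [h4] at h3
    exact h3
  have hes : F s - c * s = e := by
    rw [he, hFts, hFra]
    have : c * t = c * ((r:ℝ)*a) + c * s := by rw [hsdef]; ring
    linarith
  have hFns : F (((n : ℝ) + 1) * s) = ((n : ℝ) + 1) * F s := by
    have := hmul (n + 1) s hs0.le (by push_cast; linarith)
    push_cast at this
    exact this
  have hbig : F (((n : ℝ) + 1) * s) - c * (((n : ℝ) + 1) * s) = ((n : ℝ) + 1) * e := by
    rw [hFns, ← hes]; ring
  have hns0 : 0 ≤ ((n : ℝ) + 1) * s := by positivity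
  have hb1 : |F (((n : ℝ) + 1) * s)| ≤ B := hB _ hns0 hsmall
  have hb2 : |c * (((n : ℝ) + 1) * s)| ≤ |c| * a := by
    rw [abs_mul]
    apply mul_le_mul_of_nonneg_left _ (abs_nonneg c)
    rw [abs_of_nonneg hns0]
    exact hsmall
  calc ((n : ℝ) + 1) * |e| = |((n : ℝ) + 1) * e| := by
        rw [abs_mul, abs_of_pos hn1]
    _ = |F (((n : ℝ) + 1) * s) - c * (((n : ℝ) + 1) * s)| := by rw [hbig]
    _ ≤ |F (((n : ℝ) + 1) * s)| + |c * (((n : ℝ) + 1) * s)| := abs_sub _ _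
    _ ≤ B + |c| * a := add_le_add hb1 hb2

private lemma intervalLemma_key0 (F : ℝ → ℝ) (a b B : ℝ) (ha : 0 < a) (hab : a ≤ b)
    (hadd : ∀ x y : ℝ, 0 ≤ x → x ≤ a → 0 ≤ y → y ≤ b → F (x + y) = F x + F y)
    (hB : ∀ t : ℝ, 0 ≤ t → t ≤ a + b → |F t| ≤ B) :
    ∃ c : ℝ, ∀ t, 0 ≤ t → t ≤ a + b → F t = c * t := by
  have hb : 0 < b := lt_of_lt_of_le ha hab
  have hcore := intervalLemma_core F a b B ha hab hadd
    (fun t ht hta => hB t ht (by linarith))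
  set c := F a / a with hc
  refine ⟨c, ?_⟩
  have hF0 : F 0 = 0 := by
    have h := hcore 0 le_rfl ha.le
    simpa using h
  have main : ∀ n : ℕ, ∀ t : ℝ, 0 ≤ t → t ≤ a + b → t ≤ n * a → F t = c * t := by
    intro n
    induction n with
    | zero =>
      intro t ht _ hn
      norm_num at hn
      have : t = 0 := le_antisymm hn ht
      simp [this, hF0]
    | succ n ih =>
      intro t ht htab hn
      rcases le_or_gt t a with hta | hta
      · exact hcore t ht hta
      · have h1 : F (a + (t - a)) = F a + F (t - a) :=
          hadd a (t - a) ha.le le_rfl (by linarith) (by linarith)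
        have h2 : a + (t - a) = t := by ring
        rw [h2] at h1
        have h3 : F (t - a) = c * (t - a) := by
          apply ih (t - a) (by linarith) (by linarith)
          push_cast at hn ⊢
          linarith
        have h4 : F a = c * a := by
          have := hcore a ha.le le_rfl
          rw [this]
        rw [h1, h3, h4]; ring
  intro t ht htab
  obtain ⟨n, hn⟩ := exists_nat_ge (t / a)
  have : t ≤ n * a := by
    rw [div_le_iff₀ ha] at hn
    linarith
  exact main n t ht htab this

private lemma intervalLemma_key (F : ℝ → ℝ) (a b B : ℝ) (ha : 0 < a) (hb : 0 < b)
    (hadd : ∀ x y : ℝ, 0 ≤ x → x ≤ a → 0 ≤ y → y ≤ b → F (x + y) = F x + F y)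
    (hB : ∀ t : ℝ, 0 ≤ t → t ≤ a + b → |F t| ≤ B) :
    ∃ c : ℝ, ∀ t, 0 ≤ t → t ≤ a + b → F t = c * t := by
  rcases le_or_gt a b with hab | hab
  · exact intervalLemma_key0 F a b B ha hab hadd hB
  · have hadd' : ∀ x y : ℝ, 0 ≤ x → x ≤ b → 0 ≤ y → y ≤ a → F (x + y) = F x + F y := by
      intro x y hx hxb hy hya
      rw [add_comm, hadd y x hy hya hx hxb]; ring
    have hB' : ∀ t : ℝ, 0 ≤ t → t ≤ b + a → |F t| ≤ B := by
      intro t ht h; exact hB t ht (by linarith)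
    obtain ⟨c, hc⟩ := intervalLemma_key0 F b a B hb hab.le hadd' hB'
    exact ⟨c, fun t ht htab => hc t ht (by linarith)⟩


/-- Interval Lemma. -/
theorem statement14 (θ : ℝ → ℝ)
    (hbd : ∀ a b : ℝ, ∃ M : ℝ, ∀ x ∈ Set.Icc a b, |θ x| ≤ M)
    (u₁ u₂ v₁ v₂ : ℝ) (hu : u₁ < u₂) (hv : v₁ < v₂)
    (hadd : ∀ u ∈ Set.Icc u₁ u₂, ∀ v ∈ Set.Icc v₁ v₂, θ u + θ v = θ (u + v)) :
    ∃ c : ℝ,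
      (∀ u ∈ Set.Icc u₁ u₂, θ u = θ u₁ + c * (u - u₁)) ∧
      (∀ v ∈ Set.Icc v₁ v₂, θ v = θ v₁ + c * (v - v₁)) ∧
      (∀ w ∈ Set.Icc (u₁ + v₁) (u₂ + v₂), θ w = θ (u₁ + v₁) + c * (w - u₁ - v₁)) := by
  set a := u₂ - u₁ with hadef
  set b := v₂ - v₁ with hbdef
  have ha : 0 < a := by simp [hadef]; linarith
  have hb : 0 < b := by simp [hbdef]; linarith
  set F : ℝ → ℝ := fun t => θ (u₁ + v₁ + t) - θ (u₁ + v₁) with hF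
  -- additivity of F
  have key1 : ∀ x : ℝ, 0 ≤ x → x ≤ a → θ (u₁ + v₁ + x) - θ (u₁ + v₁) = θ (u₁ + x) - θ u₁ := by
    intro x hx hxa
    have h1 := hadd (u₁ + x) ⟨by linarith, by simp [hadef] at hxa; linarith⟩ v₁
      ⟨le_rfl, hv.le⟩
    have h2 := hadd u₁ ⟨le_rfl, hu.le⟩ v₁ ⟨le_rfl, hv.le⟩
    have e1 : u₁ + x + v₁ = u₁ + v₁ + x := by ring
    rw [e1] at h1
    linarith
  have key2 : ∀ y : ℝ, 0 ≤ y → y ≤ b → θ (u₁ + v₁ + y) - θ (u₁ + v₁) = θ (v₁ + y) - θ v₁ := by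
    intro y hy hyb
    have h1 := hadd u₁ ⟨le_rfl, hu.le⟩ (v₁ + y)
      ⟨by linarith, by simp [hbdef] at hyb; linarith⟩
    have h2 := hadd u₁ ⟨le_rfl, hu.le⟩ v₁ ⟨le_rfl, hv.le⟩
    have e1 : u₁ + (v₁ + y) = u₁ + v₁ + y := by ring
    rw [e1] at h1
    linarith
  have haddF : ∀ x y : ℝ, 0 ≤ x → x ≤ a → 0 ≤ y → y ≤ b → F (x + y) = F x + F y := by
    intro x y hx hxa hy hyb
    have h1 := hadd (u₁ + x) ⟨by linarith, by simp [hadef] at hxa; linarith⟩ (v₁ + y)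
      ⟨by linarith, by simp [hbdef] at hyb; linarith⟩
    have h2 := hadd u₁ ⟨le_rfl, hu.le⟩ v₁ ⟨le_rfl, hv.le⟩
    have e1 : u₁ + x + (v₁ + y) = u₁ + v₁ + (x + y) := by ring
    rw [e1] at h1
    have k1 := key1 x hx hxa
    have k2 := key2 y hy hyb
    simp only [hF]
    linarith
  obtain ⟨M, hM⟩ := hbd (u₁ + v₁) (u₂ + v₂)
  have hBF : ∀ t : ℝ, 0 ≤ t → t ≤ a + b → |F t| ≤ M + M := by
    intro t ht htab
    have hmem1 : u₁ + v₁ + t ∈ Set.Icc (u₁ + v₁) (u₂ + v₂) := by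
      constructor
      · linarith
      · simp [hadef, hbdef] at htab; linarith
    have hmem2 : u₁ + v₁ ∈ Set.Icc (u₁ + v₁) (u₂ + v₂) := ⟨le_rfl, by linarith⟩
    have := abs_sub (θ (u₁ + v₁ + t)) (θ (u₁ + v₁))
    have b1 := hM _ hmem1
    have b2 := hM _ hmem2
    simp only [hF]
    calc |θ (u₁ + v₁ + t) - θ (u₁ + v₁)| ≤ |θ (u₁ + v₁ + t)| + |θ (u₁ + v₁)| :=
          abs_sub _ _
      _ ≤ M + M := add_le_add b1 b2
  obtain ⟨c, hcF⟩ := intervalLemma_key F a b (M + M) ha hb haddF hBF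
  refine ⟨c, ?_, ?_, ?_⟩
  · intro u hmem
    obtain ⟨h1, h2⟩ := hmem
    have hx : 0 ≤ u - u₁ := by linarith
    have hxa : u - u₁ ≤ a := by simp [hadef]; linarith
    have := hcF (u - u₁) hx (by linarith [hb])
    have k := key1 (u - u₁) hx hxa
    simp only [hF] at this
    have e1 : u₁ + (u - u₁) = u := by ring
    rw [e1] at k
    linarith
  · intro v hmem
    obtain ⟨h1, h2⟩ := hmem
    have hy : 0 ≤ v - v₁ := by linarith
    have hyb : v - v₁ ≤ b := by simp [hbdef]; linarith
    have := hcF (v - v₁) hy (by linarith [ha])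
    have k := key2 (v - v₁) hy hyb
    simp only [hF] at this
    have e1 : v₁ + (v - v₁) = v := by ring
    rw [e1] at k
    linarith
  · intro w hmem
    obtain ⟨h1, h2⟩ := hmem
    have ht : 0 ≤ w - u₁ - v₁ := by linarith
    have htab : w - u₁ - v₁ ≤ a + b := by simp [hadef, hbdef]; linarith
    have := hcF (w - u₁ - v₁) ht htab
    simp only [hF] at this
    have e1 : u₁ + v₁ + (w - u₁ - v₁) = w := by ring
    rw [e1] at this
    linarith
end
end

section
/- Let k ≥ 1, let P_0 ⊆ ℝ^k be a convex set containing the origin, and let π : ℝ^k → ℝ be a function with π(0) = 0 that is affine on P_0 (there exist g ∈ ℝ^k and δ ∈ ℝ with π(x) = g·x + δ for all x ∈ P_0). Let π' : ℝ^k → ℝ be a bounded function with π'(0) = 0 such that E(π) ⊆ E(π'). Let Π be the parallelotope generated by linearly independent vectors v^1, …, v^n ∈ ℝ^k (so 0 ∈ Π), and suppose Π + Π ⊆ P_0. Then there exists g' ∈ ℝ^k such that π'(r) = g'·r for all r ∈ Π. -/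
open scoped BigOperators

noncomputable section

/-- Auxiliary: represent prescribed values on a linearly independent family by an inner product. -/
theorem exists_inner_rep {k n : ℕ} (v : Fin n → Vec k) (hind : LinearIndependent ℝ v)
    (c : Fin n → ℝ) : ∃ g' : Vec k, ∀ i, (inner ℝ g' (v i) : ℝ) = c i := by
  classical
  set K : Submodule ℝ (Vec k) := Submodule.span ℝ (Set.range v) with hK
  let b : Module.Basis (Fin n) ℝ K := Module.Basis.span hind
  let φ : Vec k →ₗ[ℝ] ℝ :=
    (b.constr ℝ c) ∘ₗ (K.orthogonalProjectionOnto : Vec k →L[ℝ] K).toLinearMap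
  let φc : Vec k →L[ℝ] ℝ := LinearMap.toContinuousLinearMap φ
  refine ⟨(InnerProductSpace.toDual ℝ (Vec k)).symm φc, fun i => ?_⟩
  rw [InnerProductSpace.toDual_symm_apply]
  show (b.constr ℝ c) (K.orthogonalProjectionOnto (v i)) = c i
  have hv : v i ∈ K := Submodule.subset_span ⟨i, rfl⟩
  have h1 : K.orthogonalProjectionOnto (v i) = ⟨v i, hv⟩ :=
    Submodule.orthogonalProjectionOnto_mem_subspace_eq_self (⟨v i, hv⟩ : K)
  rw [h1]
  have hb : b i = ⟨v i, hv⟩ := Module.Basis.span_apply hind i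
  rw [← hb, Module.Basis.constr_basis]

/-- `π'` is linear on parallelotopes at the origin. -/
theorem statement15 (k : ℕ) (hk : 1 ≤ k)
    (P₀ : Set (Vec k)) (hconv : Convex ℝ P₀) (h0 : (0 : Vec k) ∈ P₀)
    (π : Vec k → ℝ) (hπ0 : π 0 = 0)
    (g : Vec k) (δ : ℝ) (haff : ∀ x ∈ P₀, π x = (inner ℝ g x : ℝ) + δ)
    (π' : Vec k → ℝ) (hbdd : ∃ M : ℝ, ∀ x, |π' x| ≤ M) (hπ'0 : π' 0 = 0)
    (hE : Eadd k π ⊆ Eadd k π')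
    (n : ℕ) (v : Fin n → Vec k) (hind : LinearIndependent ℝ v)
    (Par : Set (Vec k))
    (hPar : Par = {x : Vec k | ∃ lam : Fin n → ℝ,
      (∀ i, lam i ∈ Set.Icc (0 : ℝ) 1) ∧ x = ∑ i, lam i • v i})
    (hsum : ∀ a ∈ Par, ∀ b ∈ Par, a + b ∈ P₀) :
    ∃ g' : Vec k, ∀ r ∈ Par, π' r = (inner ℝ g' r : ℝ) := by
    classical
  obtain ⟨M, hM⟩ := hbdd
  have hM0 : 0 ≤ M := le_trans (abs_nonneg _) (hM 0)
  -- δ = 0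
  have hδ : δ = 0 := by
    have h := haff 0 h0
    simp [hπ0] at h
    linarith
  -- 0 ∈ Par
  have h0Par : (0 : Vec k) ∈ Par := by
    rw [hPar]
    exact ⟨0, fun i => ⟨le_refl 0, zero_le_one⟩, by simp⟩
  have hParP₀ : ∀ a ∈ Par, a ∈ P₀ := fun a ha => by
    simpa using hsum a ha 0 h0Par
  -- additivity of π' on Par
  have hadd : ∀ a ∈ Par, ∀ b ∈ Par, π' (a + b) = π' a + π' b := by
    intro a ha b hb
    have hab : (a, b) ∈ Eadd k π := by
      show π (a + b) = π a + π b
      rw [haff _ (hsum a ha b hb), haff _ (hParP₀ a ha), haff _ (hParP₀ b hb), hδ,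
        inner_add_right]
      ring
    exact hE hab
  -- segments along v i live in Par
  have hmemPar : ∀ (i : Fin n) (t : ℝ), 0 ≤ t → t ≤ 1 → t • v i ∈ Par := by
    intro i t h0t h1t
    rw [hPar]
    refine ⟨fun j => if j = i then t else 0, ?_, ?_⟩
    · intro j; by_cases h : j = i <;> simp [h, h0t, h1t]
    · simp [ite_smul]
  set c : Fin n → ℝ := fun i => π' (v i) with hc
  -- scaling lemma
  have hscale : ∀ (i : Fin n) (m : ℕ) (s : ℝ), 0 ≤ s → (m : ℝ) * s ≤ 1 →
      π' (((m : ℝ) * s) • v i) = (m : ℝ) * π' (s • v i) := by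
    intro i m
    induction m with
    | zero => intro s _ _; simp [hπ'0]
    | succ m ih =>
      intro s hs h1
      push_cast at h1 ⊢
      have hms : (m : ℝ) * s ≤ 1 := by nlinarith [Nat.cast_nonneg (α := ℝ) m]
      have hs1 : s ≤ 1 := by nlinarith [Nat.cast_nonneg (α := ℝ) m]
      have e1 : ((m : ℝ) + 1) * s = (m : ℝ) * s + s := by ring
      rw [e1, add_smul, hadd _ (hmemPar i _ (by positivity) hms) _ (hmemPar i s hs hs1),
        ih s hs hms]
      ring
  -- linearity along each v i
  have hline : ∀ (i : Fin n) (t : ℝ), 0 ≤ t → t ≤ 1 → π' (t • v i) = t * c i := by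
    intro i t h0t h1t
    by_contra hne
    set D := |π' (t • v i) - t * c i| with hD
    have hDpos : 0 < D := abs_pos.2 (sub_ne_zero.2 hne)
    obtain ⟨N, hN⟩ := exists_nat_gt ((M + |c i|) / D)
    have hN0 : 0 < (N : ℝ) :=
      lt_of_le_of_lt (div_nonneg (by positivity) hDpos.le) hN
    set m : ℕ := ⌊(N : ℝ) * t⌋₊ with hm
    have hNt0 : 0 ≤ (N : ℝ) * t := by positivity
    have hmle : (m : ℝ) ≤ (N : ℝ) * t := Nat.floor_le hNt0
    have hltm : (N : ℝ) * t < (m : ℝ) + 1 := Nat.lt_floor_add_one _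
    set q : ℝ := (m : ℝ) / N with hq
    have hq0 : 0 ≤ q := by positivity
    have hqt : q ≤ t := by
      rw [hq, div_le_iff₀ hN0]; linarith
    have hq1 : q ≤ 1 := le_trans hqt h1t
    set s : ℝ := t - q with hs
    have hs0 : 0 ≤ s := by simp [hs]; linarith
    have hNs : (N : ℝ) * s ≤ 1 := by
      have : (N : ℝ) * s = (N : ℝ) * t - (m : ℝ) := by
        rw [hs, hq]; field_simp
      rw [this]; linarith
    have hs1 : s ≤ 1 := le_trans (by linarith) h1t
    -- π' (q • v i) = q * c i
    have hinv : π' ((1 / (N : ℝ)) • v i) = c i / N := by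
      have h1N : 0 ≤ 1 / (N : ℝ) := by positivity
      have hNN : (N : ℝ) * (1 / N) = 1 := by field_simp
      have := hscale i N (1 / N) h1N (by rw [hNN])
      rw [hNN, one_smul] at this
      rw [hc] at *
      field_simp
      linarith [this]
    have hqv : π' (q • v i) = q * c i := by
      have hm1 : (m : ℝ) * (1 / N) = q := by rw [hq]; field_simp
      have := hscale i m (1 / N) (by positivity) (by rw [hm1]; exact hq1)
      rw [hm1, hinv] at this
      rw [this, hq]; ring
    -- |π' (s • v i)| ≤ M / N
    have hsv : |π' (s • v i)| ≤ M / N := by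
      have := hscale i N s hs0 hNs
      have habs : (N : ℝ) * |π' (s • v i)| ≤ M := by
        calc (N : ℝ) * |π' (s • v i)| = |(N : ℝ) * π' (s • v i)| := by
              rw [abs_mul, abs_of_pos hN0]
          _ = |π' (((N : ℝ) * s) • v i)| := by rw [this]
          _ ≤ M := hM _
      rw [le_div_iff₀ hN0]; linarith
    -- combine
    have hdecomp : π' (t • v i) = q * c i + π' (s • v i) := by
      have : t • v i = q • v i + s • v i := by
        rw [← add_smul]; congr 1; rw [hs]; ring
      rw [this, hadd _ (hmemPar i q hq0 hq1) _ (hmemPar i s hs0 hs1), hqv]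
    have hsq : |q - t| ≤ 1 / N := by
      rw [abs_sub_comm, abs_of_nonneg (by linarith : (0:ℝ) ≤ t - q)]
      rw [le_div_iff₀ hN0]
      have : (N : ℝ) * (t - q) = (N : ℝ) * s := by rw [hs]
      linarith [hNs, this]
    have hDle : D ≤ (M + |c i|) / N := by
      rw [hD, hdecomp]
      have : q * c i + π' (s • v i) - t * c i = (q - t) * c i + π' (s • v i) := by ring
      rw [this]
      calc |(q - t) * c i + π' (s • v i)| ≤ |(q - t) * c i| + |π' (s • v i)| := abs_add_le _ _
        _ ≤ |q - t| * |c i| + M / N := by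
            rw [abs_mul]; exact add_le_add le_rfl hsv
        _ ≤ (1 / N) * |c i| + M / N := by
            apply add_le_add_left
            exact mul_le_mul_of_nonneg_right hsq (abs_nonneg _)
        _ = (M + |c i|) / N := by field_simp; ring
    have : (M + |c i|) / N < D := by
      rw [div_lt_iff₀ hN0]
      rw [div_lt_iff₀ hDpos] at hN
      linarith
    linarith
  -- partial sums lie in Par
  have hmemsum : ∀ (lam : Fin n → ℝ), (∀ i, lam i ∈ Set.Icc (0 : ℝ) 1) →
      ∀ s : Finset (Fin n), (∑ i ∈ s, lam i • v i) ∈ Par := by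
    intro lam hlam s
    rw [hPar]
    refine ⟨fun i => if i ∈ s then lam i else 0, ?_, ?_⟩
    · intro i; by_cases h : i ∈ s <;> simp [h, (hlam i).1, (hlam i).2]
    · simp only [ite_smul, zero_smul]
      rw [Finset.sum_ite_mem, Finset.univ_inter]
  -- additivity over sums
  have hsumlin : ∀ (lam : Fin n → ℝ), (∀ i, lam i ∈ Set.Icc (0 : ℝ) 1) →
      ∀ s : Finset (Fin n), π' (∑ i ∈ s, lam i • v i) = ∑ i ∈ s, lam i * c i := by
    intro lam hlam s
    induction s using Finset.induction with
    | empty => simp [hπ'0]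
    | @insert a s ha ih =>
      rw [Finset.sum_insert ha, Finset.sum_insert ha,
        hadd _ (hmemPar a (lam a) (hlam a).1 (hlam a).2) _ (hmemsum lam hlam s),
        ih, hline a (lam a) (hlam a).1 (hlam a).2]
  -- construct g'
  obtain ⟨g', hg'⟩ := exists_inner_rep v hind c
  refine ⟨g', ?_⟩
  intro r hr
  rw [hPar] at hr
  obtain ⟨lam, hlam, rfl⟩ := hr
  rw [hsumlin lam hlam Finset.univ, inner_sum]
  refine Finset.sum_congr rfl fun i _ => ?_
  rw [real_inner_smul_right, hg']
end
end

section
/- Let k ≥ 1. Let a^1, …, a^{k+1} ∈ ℝ^k satisfy cone(a^1, …, a^{k+1}) = ℝ^k, let r^1, …, r^{k+1} ∈ ℝ^k satisfy cone(r^1, …, r^{k+1}) = ℝ^k, and let μ_{ij} ≥ 0 (1 ≤ i, j ≤ k+1) satisfy ∑_{j=1}^{k+1} μ_{ij} = 1 for every i. Then there is at most one tuple (g^1, …, g^{k+1}) ∈ (ℝ^k)^{k+1} satisfying the linear system: ∑_{j=1}^{k+1} μ_{ij}(a^i · g^j) = 1 for all i ∈ {1, …, k+1}, and r^i · g^j =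 r^i · g^ℓ for all i, j, ℓ ∈ {1, …, k+1} with j ≠ i and ℓ ≠ i. -/
open scoped BigOperators

noncomputable section

lemma cone_span_inner {k m : ℕ} (v : Fin m → Vec k) (h : coneOf v = Set.univ)
    (x : Vec k) (hx : ∀ i, (inner ℝ (v i) x : ℝ) = 0) : x = 0 := by
  have hxmem : x ∈ coneOf v := h ▸ Set.mem_univ x
  obtain ⟨lam, hlam, hsum⟩ := hxmem
  have hz : (inner ℝ (∑ i, lam i • v i) x : ℝ) = 0 := by
    rw [sum_inner]
    refine Finset.sum_eq_zero fun i _ => ?_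
    rw [real_inner_smul_left, hx i, mul_zero]
  rw [← hsum] at hz
  exact inner_self_eq_zero.mp hz

lemma cone_pos_dep {k m : ℕ} (v : Fin m → Vec k) (h : coneOf v = Set.univ) :
    ∃ c : Fin m → ℝ, (∀ i, 0 < c i) ∧ ∑ i, c i • v i = 0 := by
  have hmem : (-(∑ i, v i) : Vec k) ∈ coneOf v := h ▸ Set.mem_univ _
  obtain ⟨lam, hlam, hsum⟩ := hmem
  refine ⟨fun i => lam i + 1, fun i => by
    show (0:ℝ) < lam i + 1; linarith [hlam i], ?_⟩
  have h2 : ∑ i, (lam i + 1) • v i = ∑ i, lam i • v i + ∑ i, v i := by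
    rw [← Finset.sum_add_distrib]
    exact Finset.sum_congr rfl fun i _ => by rw [add_smul, one_smul]
  rw [h2, ← hsum]
  simp

lemma solve_system {k : ℕ} (r : Fin (k+1) → Vec k) (hr : coneOf r = Set.univ)
    (c : Fin (k+1) → ℝ) (hcpos : ∀ p, 0 < c p)
    (hczero : ∑ p, c p • r p = 0)
    (v : Fin (k+1) → ℝ) (hv : ∑ p, c p * v p = 0) :
    ∃ x : Vec k, ∀ p, (inner ℝ (r p) x : ℝ) = v p := by
  set Φ : Vec k →ₗ[ℝ] (Fin k → ℝ) :=
    { toFun := fun x q => (inner ℝ (r q.succ) x : ℝ)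
      map_add' := fun x y => by ext q; simp [inner_add_right]
      map_smul' := fun t x => by ext q; simp [inner_smul_right] } with hΦ
  have hsum0 : ∀ x : Vec k, ∑ p, c p * (inner ℝ (r p) x : ℝ) = 0 := by
    intro x
    have h1 : (inner ℝ (∑ p, c p • r p) x : ℝ) = 0 := by rw [hczero, inner_zero_left]
    rw [sum_inner] at h1
    simp only [real_inner_smul_left] at h1
    exact h1
  have hinj : Function.Injective Φ := by
    rw [← LinearMap.ker_eq_bot, LinearMap.ker_eq_bot']
    intro x hx
    have hx' : ∀ q : Fin k, (inner ℝ (r q.succ) x : ℝ) = 0 := fun q => congrFun hx q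
    have h0 : (inner ℝ (r 0) x : ℝ) = 0 := by
      have := hsum0 x
      rw [Fin.sum_univ_succ] at this
      have h2 : ∑ q : Fin k, c q.succ * (inner ℝ (r q.succ) x : ℝ) = 0 :=
        Finset.sum_eq_zero fun q _ => by rw [hx' q, mul_zero]
      rw [h2, add_zero] at this
      exact (mul_eq_zero.mp this).resolve_left (ne_of_gt (hcpos 0))
    refine cone_span_inner r hr x fun p => ?_
    rcases Fin.eq_zero_or_eq_succ p with hp | ⟨q, hq⟩
    · rw [hp]; exact h0
    · rw [hq]; exact hx' q
  have hfr : Module.finrank ℝ (Vec k) = Module.finrank ℝ (Fin k → ℝ) := by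
    simp [finrank_euclideanSpace_fin]
  have hsurj : Function.Surjective Φ :=
    (LinearMap.injective_iff_surjective_of_finrank_eq_finrank hfr).mp hinj
  obtain ⟨x, hx⟩ := hsurj (fun q => v q.succ)
  refine ⟨x, fun p => ?_⟩
  have hxq : ∀ q : Fin k, (inner ℝ (r q.succ) x : ℝ) = v q.succ := fun q => congrFun hx q
  rcases Fin.eq_zero_or_eq_succ p with hp | ⟨q, hq⟩
  · subst hp
    have h1 := hsum0 x
    rw [Fin.sum_univ_succ] at h1 hv
    have h2 : ∑ q : Fin k, c q.succ * (inner ℝ (r q.succ) x : ℝ)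
        = ∑ q : Fin k, c q.succ * v q.succ :=
      Finset.sum_congr rfl fun q _ => by rw [hxq q]
    rw [h2] at h1
    have hc0 := hcpos 0
    have h3 : c 0 * (inner ℝ (r 0) x : ℝ) = c 0 * v 0 := by linarith
    exact mul_left_cancel₀ (ne_of_gt hc0) h3
  · rw [hq]; exact hxq q

lemma rep_lemma {k : ℕ} (hk : 1 ≤ k) (r : Fin (k+1) → Vec k)
    (c : Fin (k+1) → ℝ) (hcpos : ∀ p, 0 < c p)
    (hczero : ∑ p, c p • r p = 0)
    (g : Fin (k+1) → Vec k)
    (hg2 : ∀ i j l, j ≠ i → l ≠ i → (inner ℝ (r i) (g j) : ℝ) = (inner ℝ (r i) (g l) : ℝ)) :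
    ∃ (y : Fin (k+1) → ℝ) (T : ℝ),
      (∀ p j, (inner ℝ (r p) (g j) : ℝ) = y p - (if p = j then T / c p else 0)) ∧
      T = ∑ p, c p * y p := by
  have h01 : (0 : Fin (k+1)) ≠ 1 := by
    have hv1 : ((1 : Fin (k+1)) : ℕ) = 1 := by
      rw [Fin.val_one']; exact Nat.mod_eq_of_lt (by omega)
    intro h
    have h2 : ((0 : Fin (k+1)) : ℕ) = ((1 : Fin (k+1)) : ℕ) := congrArg Fin.val h
    rw [Fin.val_zero, hv1] at h2
    exact absurd h2 (by omega)
  set pick : Fin (k+1) → Fin (k+1) := fun i => if i = 0 then 1 else 0 with hpick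
  have hpickne : ∀ i, pick i ≠ i := by
    intro i h
    by_cases hi : i = 0
    · rw [hpick] at h; simp only [hi, if_pos rfl] at h; exact h01 (hi ▸ h.symm)
    · rw [hpick] at h; simp only [if_neg hi] at h; exact hi h.symm
  set y : Fin (k+1) → ℝ := fun i => (inner ℝ (r i) (g (pick i)) : ℝ) with hy
  set T : ℝ := ∑ p, c p * y p with hT
  have hoff : ∀ p j, p ≠ j → (inner ℝ (r p) (g j) : ℝ) = y p := by
    intro p j hpj
    exact hg2 p j (pick p) (fun h => hpj h.symm) (hpickne p)
  refine ⟨y, T, fun p j => ?_, hT⟩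
  by_cases hpj : p = j
  · subst hpj
    rw [if_pos rfl]
    have hsum0 : ∑ q, c q * (inner ℝ (r q) (g p) : ℝ) = 0 := by
      have h1 : (inner ℝ (∑ q, c q • r q) (g p) : ℝ) = 0 := by rw [hczero, inner_zero_left]
      rw [sum_inner] at h1
      simp only [real_inner_smul_left] at h1
      exact h1
    have hsplit : ∑ q ∈ Finset.univ.erase p, c q * (inner ℝ (r q) (g p) : ℝ)
        + c p * (inner ℝ (r p) (g p) : ℝ) = ∑ q, c q * (inner ℝ (r q) (g p) : ℝ) :=
      Finset.sum_erase_add _ _ (Finset.mem_univ p)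
    have hTsplit : ∑ q ∈ Finset.univ.erase p, c q * y q + c p * y p = T :=
      Finset.sum_erase_add _ _ (Finset.mem_univ p)
    have heq : ∑ q ∈ Finset.univ.erase p, c q * (inner ℝ (r q) (g p) : ℝ)
        = ∑ q ∈ Finset.univ.erase p, c q * y q :=
      Finset.sum_congr rfl fun q hq => by
        rw [hoff q p (Finset.ne_of_mem_erase hq)]
    rw [heq] at hsplit
    rw [hsum0] at hsplit
    have hc := hcpos p
    have hkey : c p * (inner ℝ (r p) (g p) : ℝ) = c p * y p - T := by linarith
    refine mul_left_cancel₀ (ne_of_gt hc) ?_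
    rw [mul_sub, mul_comm (c p) (T / c p), div_mul_cancel₀ _ (ne_of_gt hc)]
    linarith
  · rw [if_neg hpj, sub_zero]; exact hoff p j hpj


/-- The linear system on the gradients has at most one solution. -/
theorem statement17 (k : ℕ) (hk : 1 ≤ k) (a r : Fin (k + 1) → Vec k)
    (ha : coneOf a = Set.univ) (hr : coneOf r = Set.univ)
    (μ : Fin (k + 1) → Fin (k + 1) → ℝ) (hμ : ∀ i j, 0 ≤ μ i j)
    (hμsum : ∀ i, ∑ j, μ i j = 1)
    (g h : Fin (k + 1) → Vec k)
    (hg1 : ∀ i, ∑ j, μ i j * (inner ℝ (a i) (g j) : ℝ) = 1)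
    (hg2 : ∀ i j l, j ≠ i → l ≠ i → (inner ℝ (r i) (g j) : ℝ) = (inner ℝ (r i) (g l) : ℝ))
    (hh1 : ∀ i, ∑ j, μ i j * (inner ℝ (a i) (h j) : ℝ) = 1)
    (hh2 : ∀ i j l, j ≠ i → l ≠ i → (inner ℝ (r i) (h j) : ℝ) = (inner ℝ (r i) (h l) : ℝ)) :
    g = h := by
  obtain ⟨c, hcpos, hczero⟩ := cone_pos_dep r hr
  obtain ⟨lam, hlampos, hlamzero⟩ := cone_pos_dep a ha
  obtain ⟨y, T, hgdesc, hgT⟩ := rep_lemma hk r c hcpos hczero g hg2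
  obtain ⟨y', T', hhdesc, hhT⟩ := rep_lemma hk r c hcpos hczero h hh2
  set Q : ℝ := ∑ p, c p * c p with hQdef
  have hQpos : 0 < Q := Finset.sum_pos (fun p _ => mul_pos (hcpos p) (hcpos p))
    Finset.univ_nonempty
  have hQne : Q ≠ 0 := ne_of_gt hQpos
  -- the direction vectors u j
  have hue : ∀ j : Fin (k+1),
      ∑ p, c p * (c p / Q - if p = j then 1 / c j else 0) = 0 := by
    intro j
    have h1 : ∑ p, c p * (c p / Q - if p = j then 1 / c j else 0)
        = ∑ p, (c p * c p / Q - if p = j then c p * (1 / c j) else 0) := by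
      refine Finset.sum_congr rfl fun p _ => ?_
      rw [mul_sub, mul_ite, mul_zero, mul_div_assoc]
    rw [h1, Finset.sum_sub_distrib, ← Finset.sum_div]
    rw [Finset.sum_ite_eq' Finset.univ j (fun p => c p * (1 / c j))]
    simp only [Finset.mem_univ, if_true]
    rw [← hQdef, div_self hQne, mul_one_div, div_self (ne_of_gt (hcpos j))]
    ring
  choose u hu using fun j =>
    solve_system r hr c hcpos hczero (fun p => c p / Q - if p = j then 1 / c j else 0) (hue j)
  -- the base points G, H
  have hGexists : ∀ (T₀ : ℝ) (y₀ : Fin (k+1) → ℝ), T₀ = ∑ p, c p * y₀ p →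
      ∃ x : Vec k, ∀ p, (inner ℝ (r p) x : ℝ) = y₀ p - c p * T₀ / Q := by
    intro T₀ y₀ hT₀
    refine solve_system r hr c hcpos hczero _ ?_
    have h1 : ∀ p : Fin (k+1), c p * (y₀ p - c p * T₀ / Q)
        = c p * y₀ p - c p * c p * T₀ / Q := fun p => by ring
    rw [Finset.sum_congr rfl (fun p _ => h1 p), Finset.sum_sub_distrib]
    have h2 : ∑ p, c p * c p * T₀ / Q = Q * T₀ / Q := by
      rw [← Finset.sum_div, ← Finset.sum_mul, ← hQdef]
    rw [h2, mul_comm, mul_div_assoc, div_self hQne, mul_one, ← hT₀, sub_self]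
  obtain ⟨G, hG⟩ := hGexists T y hgT
  obtain ⟨H, hH⟩ := hGexists T' y' hhT
  -- representation g j = G + T • u j
  have hrepg : ∀ j, g j = G + T • u j := by
    intro j
    have hz : ∀ p, (inner ℝ (r p) (g j - (G + T • u j)) : ℝ) = 0 := by
      intro p
      rw [inner_sub_right, inner_add_right, real_inner_smul_right,
        hgdesc p j, hG p, hu j p]
      by_cases hpj : p = j
      · subst hpj
        simp only [eq_self_iff_true, if_true]
        have hcp := (hcpos p).ne'
        field_simp
        ring
      · simp only [if_neg hpj]; ring
    have := cone_span_inner r hr _ hz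
    rw [sub_eq_zero] at this
    exact this
  have hreph : ∀ j, h j = H + T' • u j := by
    intro j
    have hz : ∀ p, (inner ℝ (r p) (h j - (H + T' • u j)) : ℝ) = 0 := by
      intro p
      rw [inner_sub_right, inner_add_right, real_inner_smul_right,
        hhdesc p j, hH p, hu j p]
      by_cases hpj : p = j
      · subst hpj
        simp only [eq_self_iff_true, if_true]
        have hcp := (hcpos p).ne'
        field_simp
        ring
      · simp only [if_neg hpj]; ring
    have := cone_span_inner r hr _ hz
    rw [sub_eq_zero] at this
    exact this
  -- the transformed equations
  set P : Fin (k+1) → ℝ := fun i => ∑ j, μ i j * (inner ℝ (a i) (u j) : ℝ) with hP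
  have hEq : ∀ (T₀ : ℝ) (G₀ : Vec k) (x : Fin (k+1) → Vec k),
      (∀ j, x j = G₀ + T₀ • u j) → ∀ i, (∑ j, μ i j * (inner ℝ (a i) (x j) : ℝ))
        = (inner ℝ (a i) G₀ : ℝ) + T₀ * P i := by
    intro T₀ G₀ x hx i
    have h1 : ∀ j, μ i j * (inner ℝ (a i) (x j) : ℝ)
        = μ i j * (inner ℝ (a i) G₀ : ℝ) + T₀ * (μ i j * (inner ℝ (a i) (u j) : ℝ)) := by
      intro j; rw [hx j, inner_add_right, real_inner_smul_right]; ring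
    rw [Finset.sum_congr rfl (fun j _ => h1 j), Finset.sum_add_distrib,
      ← Finset.sum_mul, hμsum i, one_mul, ← Finset.mul_sum]
  have hEg : ∀ i, (inner ℝ (a i) G : ℝ) + T * P i = 1 := fun i => by
    rw [← hEq T G g hrepg i]; exact hg1 i
  have hEh : ∀ i, (inner ℝ (a i) H : ℝ) + T' * P i = 1 := fun i => by
    rw [← hEq T' H h hreph i]; exact hh1 i
  set S : ℝ := ∑ i, lam i * P i with hS
  set Λ : ℝ := ∑ i, lam i with hΛ
  have hΛpos : 0 < Λ := Finset.sum_pos (fun i _ => hlampos i) Finset.univ_nonempty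
  have hzero : ∀ x : Vec k, ∑ i, lam i * (inner ℝ (a i) x : ℝ) = 0 := by
    intro x
    have h1 : (inner ℝ (∑ i, lam i • a i) x : ℝ) = 0 := by rw [hlamzero, inner_zero_left]
    rw [sum_inner] at h1; simp only [real_inner_smul_left] at h1; exact h1
  have hTS : ∀ (T₀ : ℝ) (G₀ : Vec k), (∀ i, (inner ℝ (a i) G₀ : ℝ) + T₀ * P i = 1) →
      T₀ * S = Λ := by
    intro T₀ G₀ hE
    have h1 : ∑ i, lam i * ((inner ℝ (a i) G₀ : ℝ) + T₀ * P i) = ∑ i, lam i :=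
      Finset.sum_congr rfl fun i _ => by rw [hE i, mul_one]
    have h2 : ∑ i, lam i * ((inner ℝ (a i) G₀ : ℝ) + T₀ * P i)
        = ∑ i, lam i * (inner ℝ (a i) G₀ : ℝ) + T₀ * ∑ i, lam i * P i := by
      rw [Finset.mul_sum, ← Finset.sum_add_distrib]
      exact Finset.sum_congr rfl fun i _ => by ring
    rw [h2, hzero G₀, zero_add] at h1
    exact h1
  have hTSg : T * S = Λ := hTS T G hEg
  have hTSh : T' * S = Λ := hTS T' H hEh
  have hSne : S ≠ 0 := by
    intro h0
    rw [h0, mul_zero] at hTSg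
    exact (ne_of_gt hΛpos) hTSg.symm
  have hTT' : T = T' := mul_right_cancel₀ hSne (hTSg.trans hTSh.symm)
  have hGH : G = H := by
    have hz : ∀ i, (inner ℝ (a i) (G - H) : ℝ) = 0 := by
      intro i
      have e1 := hEg i
      have e2 := hEh i
      rw [hTT'] at e1
      rw [inner_sub_right]
      linarith
    have h0 := cone_span_inner a ha _ hz
    rwa [sub_eq_zero] at h0
  funext j
  rw [hrepg j, hreph j, hGH, hTT']
end
end
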